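/- The cf1.5 semantics satisfies finitary directionality: if F = (A, R) is a finitary argumentation framework and U ⊆ A is such that no argument in A \ U attacks an argument of U, then the set of cf1.5-extensions of F↾U equals {S ∩ U | S is a cf1.5-extension of F}. -/

import Mathlib

/-!
Basic notions of abstract argumentation frameworks, following
Andrews–San Mauro, "SCC-recursiveness in infinite argumentation".
-/

universe u

/-- An argumentation framework: a set `A` of arguments together with an
attack relation `R ⊆ A × A`. -/
structure AF (α : Type u) where
  A : Set α
  R : α → α → Prop
  attack_mem : ∀ ⦃a b : α⦄, R a b → a ∈ A ∧ b ∈ A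

namespace AF

variable {α : Type u}

/-- The restriction `F↾U = (A ∩ U, R ∩ (U × U))`. -/
def restrict (F : AF α) (U : Set α) : AF α where
  A := F.A ∩ U
  R a b := F.R a b ∧ a ∈ U ∧ b ∈ U
  attack_mem := by
    intro a b h
    exact ⟨⟨(F.attack_mem h.1).1, h.2.1⟩, ⟨(F.attack_mem h.1).2, h.2.2⟩⟩

/-- `S` is conflict-free: `S ⊆ A` and no argument of `S` attacks another. -/
def ConflictFree (F : AF α) (S : Set α) : Prop :=
  S ⊆ F.A ∧ ∀ a ∈ S, ∀ b ∈ S, ¬ F.R a b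

/-- `S` is a naive extension: conflict-free and ⊆-maximal among conflict-free sets. -/
def Naive (F : AF α) (S : Set α) : Prop :=
  ConflictFree F S ∧ ∀ T, ConflictFree F T → S ⊆ T → S = T

/-- `S⁺`: the set of arguments attacked by `S`. -/
def plus (F : AF α) (S : Set α) : Set α := {x | ∃ y ∈ S, F.R y x}

/-- The range `S⊕ = S ∪ S⁺`. -/
def rng (F : AF α) (S : Set α) : Set α := S ∪ plus F S

/-- `S` is a stage extension: conflict-free with ⊆-maximal range among
conflict-free sets. -/
def Stage (F : AF α) (S : Set α) : Prop :=
  ConflictFree F S ∧ ¬ ∃ T, ConflictFree F T ∧ rng F S ⊂ rng F T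

/-- `F` is finitary: every argument has finitely many attackers. -/
def Finitary (F : AF α) : Prop := ∀ a, {x | F.R x a}.Finite

/-- There is a directed path from `a` to `b` in `F` (both being arguments of `F`). -/
def Reach (F : AF α) (a b : α) : Prop :=
  a ∈ F.A ∧ b ∈ F.A ∧ Relation.ReflTransGen F.R a b

/-- The strongly connected component of `a` in `F`. -/
def SCCof (F : AF α) (a : α) : Set α := {b | Reach F a b ∧ Reach F b a}

/-- `X` is a strongly connected component of `F`. -/
def IsSCC (F : AF α) (X : Set α) : Prop := ∃ a ∈ F.A, X = SCCof F a

/-- `D_S(X)`: the elements of `X` attacked by an element of `S` outside `X`. -/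
def Dset (F : AF α) (S X : Set α) : Set α := {b ∈ X | ∃ a ∈ S \ X, F.R a b}

/-- `S` is a cf1.5-extension of `F`. -/
def CF15 (F : AF α) (S : Set α) : Prop :=
  ConflictFree F S ∧
    ∀ X, IsSCC F X → Naive (F.restrict (X \ Dset F S X)) (S ∩ X)

/-- `S` is a stg1.5-extension of `F`. -/
def STG15 (F : AF α) (S : Set α) : Prop :=
  ConflictFree F S ∧
    ∀ X, IsSCC F X → Stage (F.restrict (X \ Dset F S X)) (S ∩ X)

/-- `C_S^α(a)`, defined by transfinite recursion. -/
noncomputable def Cseq (F : AF α) (S : Set α) (a : α) (o : Ordinal.{0}) : Set α :=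
  Ordinal.limitRecOn o (SCCof F a)
    (fun _ C => SCCof (F.restrict (C \ Dset F S C)) a)
    (fun o' _ ih => SCCof (F.restrict (⋂ β : {β : Ordinal.{0} // β < o'}, ih β.1 β.2)) a)

/-- The component ordinal `α_S(a)`: the least `α` with `a ∉ C_S^α(a)` or
`C_S^{α+1}(a) = C_S^α(a)`. -/
noncomputable def alphaS (F : AF α) (S : Set α) (a : α) : Ordinal.{0} :=
  sInf {o | a ∉ Cseq F S a o ∨ Cseq F S a (o + 1) = Cseq F S a o}

/-- `S` is an icft-extension (tfcf2-extension) of `F`. -/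
def ICFT (F : AF α) (S : Set α) : Prop :=
  ConflictFree F S ∧ ∀ a ∈ F.A,
    a ∉ Cseq F S a (alphaS F S a) ∨
      Naive (F.restrict (Cseq F S a (alphaS F S a))) (S ∩ Cseq F S a (alphaS F S a))

/-- `S` is an istgt-extension (tf-stg2-extension) of `F`. -/
def ISTGT (F : AF α) (S : Set α) : Prop :=
  ConflictFree F S ∧ ∀ a ∈ F.A,
    a ∉ Cseq F S a (alphaS F S a) ∨
      Stage (F.restrict (Cseq F S a (alphaS F S a))) (S ∩ Cseq F S a (alphaS F S a))

/-- The characteristic function `f_F`. -/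
def charF (F : AF α) (S : Set α) : Set α :=
  {x ∈ F.A | ∀ y, F.R y x → ∃ z ∈ S, F.R z y}

/-- `G` is the grounded extension of `F`: the least fixed point of `f_F`. -/
def IsGrounded (F : AF α) (G : Set α) : Prop :=
  charF F G = G ∧ ∀ T, charF F T = T → G ⊆ T

/-- `conf(F)`: the set of conflicting pairs of `F`. -/
def confl (F : AF α) : Set (α × α) := {p | F.R p.1 p.2 ∨ F.R p.2 p.1}

/-- The operator `Δ_{F,S}(D)`. -/
def DeltaOp (F : AF α) (S D : Set α) : Set α :=
  {a ∈ F.A | ∃ b ∈ S, F.R b a ∧ ¬ Reach (F.restrict (F.A \ D)) a b}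

/-- `Δ^α_{F,S}`, defined by transfinite recursion. -/
noncomputable def Deltaseq (F : AF α) (S : Set α) (o : Ordinal.{0}) : Set α :=
  Ordinal.limitRecOn o (∅ : Set α)
    (fun _ D => DeltaOp F S D)
    (fun o' _ ih => ⋃ β : {β : Ordinal.{0} // β < o'}, ih β.1 β.2)

/-- The least fixed point `Δ_{F,S}` of the monotone operator `Δ_{F,S}(·)`,
given by Knaster–Tarski as the intersection of all prefixed points. -/
def DeltaFix (F : AF α) (S : Set α) : Set α :=
  ⋂₀ {D | DeltaOp F S D ⊆ D}

end AF


/-! ### Auxiliary development for the proof -/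

namespace CF15Proof

open AF Relation

open scoped Classical

variable {α : Type u}

/-- Pointwise characterization of cf1.5. -/
def PW (H : AF α) (S : Set α) : Prop :=
  ConflictFree H S ∧ ∀ v ∈ H.A, v ∉ S →
    H.R v v ∨ (∃ s ∈ S, H.R s v) ∨ ∃ w ∈ S, H.R v w ∧ Reach H v w ∧ Reach H w v

theorem reach_trans {H : AF α} {a b c : α} (h1 : Reach H a b) (h2 : Reach H b c) :
    Reach H a c := ⟨h1.1, h2.2.1, h1.2.2.trans h2.2.2⟩

theorem reach_refl {H : AF α} {a : α} (ha : a ∈ H.A) : Reach H a a :=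
  ⟨ha, ha, Relation.ReflTransGen.refl⟩

theorem mem_sccof_self {H : AF α} {a : α} (ha : a ∈ H.A) : a ∈ SCCof H a :=
  ⟨reach_refl ha, reach_refl ha⟩

theorem sccof_eq {H : AF α} {a b : α} (h : b ∈ SCCof H a) : SCCof H b = SCCof H a := by
  have h1 : Reach H a b := h.1
  have h2 : Reach H b a := h.2
  ext c
  exact ⟨fun hc => ⟨reach_trans h1 hc.1, reach_trans hc.2 h2⟩,
         fun hc => ⟨reach_trans h2 hc.1, reach_trans hc.2 h1⟩⟩

/-- The pointwise characterization is equivalent to `CF15`. -/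
theorem char {H : AF α} {S : Set α} : CF15 H S ↔ PW H S := by
  constructor
  · rintro ⟨cf, hX⟩
    refine ⟨cf, ?_⟩
    intro v hv hvS
    by_cases hd : ∃ s, s ∈ S ∧ s ∉ SCCof H v ∧ H.R s v
    · obtain ⟨s, hs1, _, hs3⟩ := hd
      exact Or.inr (Or.inl ⟨s, hs1, hs3⟩)
    · have hvX : v ∈ SCCof H v := mem_sccof_self hv
      have hvD : v ∉ Dset H S (SCCof H v) := by
        rintro ⟨-, a, ⟨haS, haX⟩, haR⟩
        exact hd ⟨a, haS, haX, haR⟩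
      have hn := hX (SCCof H v) ⟨v, hv, rfl⟩
      set Y : Set α := SCCof H v \ Dset H S (SCCof H v) with hY
      have hSXsub : S ∩ SCCof H v ⊆ (H.restrict Y).A := by
        rintro s ⟨hsS, hsX⟩
        refine ⟨cf.1 hsS, hsX, ?_⟩
        rintro ⟨-, a, ⟨haS, -⟩, haR⟩
        exact cf.2 a haS s hsS haR
      have hTsub : insert v (S ∩ SCCof H v) ⊆ (H.restrict Y).A := by
        intro y hy
        rcases Set.mem_insert_iff.mp hy with rfl | hy
        · exact ⟨hv, hvX, hvD⟩
        · exact hSXsub hy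
      by_cases hTcf : ConflictFree (H.restrict Y) (insert v (S ∩ SCCof H v))
      · have heq := hn.2 _ hTcf (Set.subset_insert _ _)
        have : v ∈ S ∩ SCCof H v := by rw [heq]; exact Set.mem_insert _ _
        exact absurd this.1 hvS
      · have hatt : ∃ a ∈ insert v (S ∩ SCCof H v), ∃ b ∈ insert v (S ∩ SCCof H v),
            (H.restrict Y).R a b := by
          by_contra hno
          push_neg at hno
          exact hTcf ⟨hTsub, hno⟩
        obtain ⟨a, ha, b, hb, hab⟩ := hatt
        rcases Set.mem_insert_iff.mp ha with rfl | ha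
        · rcases Set.mem_insert_iff.mp hb with rfl | hb
          · exact Or.inl hab.1
          · exact Or.inr (Or.inr ⟨b, hb.1, hab.1, hb.2.1, hb.2.2⟩)
        · rcases Set.mem_insert_iff.mp hb with rfl | hb
          · exact Or.inr (Or.inl ⟨a, ha.1, hab.1⟩)
          · exact absurd hab.1 (cf.2 a ha.1 b hb.1)
  · rintro ⟨cf, pw⟩
    refine ⟨cf, ?_⟩
    rintro X ⟨a, ha, rfl⟩
    set Y : Set α := SCCof H a \ Dset H S (SCCof H a) with hY
    have hsubA : S ∩ SCCof H a ⊆ (H.restrict Y).A := by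
      rintro s ⟨hsS, hsX⟩
      refine ⟨cf.1 hsS, hsX, ?_⟩
      rintro ⟨-, b, ⟨hbS, -⟩, hbR⟩
      exact cf.2 b hbS s hsS hbR
    refine ⟨⟨hsubA, fun s hs t ht h => cf.2 s hs.1 t ht.1 h.1⟩, ?_⟩
    intro T hT hsub
    refine Set.Subset.antisymm hsub (fun t ht => ?_)
    have htA := hT.1 ht
    have htX : t ∈ SCCof H a := htA.2.1
    have htD : t ∉ Dset H S (SCCof H a) := htA.2.2
    by_cases htS : t ∈ S
    · exact ⟨htS, htX⟩
    rcases pw t htA.1 htS with hself | ⟨s, hsS, hsv⟩ | ⟨w, hwS, hvw, hr1, hr2⟩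
    · exact absurd ⟨hself, htA.2, htA.2⟩ (hT.2 t ht t ht)
    · by_cases hsX : s ∈ SCCof H a
      · have hsT : s ∈ T := hsub ⟨hsS, hsX⟩
        exact absurd ⟨hsv, (hsubA ⟨hsS, hsX⟩).2, htA.2⟩ (hT.2 s hsT t ht)
      · exact absurd ⟨htX, s, ⟨hsS, hsX⟩, hsv⟩ htD
    · have hwX : w ∈ SCCof H a := by
        have : w ∈ SCCof H t := ⟨hr1, hr2⟩
        rwa [sccof_eq htX] at this
      have hwT : w ∈ T := hsub ⟨hwS, hwX⟩
      exact absurd ⟨hvw, htA.2, (hsubA ⟨hwS, hwX⟩).2⟩ (hT.2 t ht w hwT)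

theorem reach_restrict {F : AF α} {V : Set α} {a b : α} (h : Reach (F.restrict V) a b) :
    Reach F a b :=
  ⟨h.1.1, h.2.1.1, Relation.ReflTransGen.mono (fun _ _ (hxy : (F.restrict V).R _ _) => hxy.1) _ _ h.2.2⟩

theorem rtg_into_U {F : AF α} {U : Set α} (hunatt : ∀ a ∈ F.A \ U, ∀ b ∈ U, ¬ F.R a b)
    {u v : α} (hv : v ∈ U) (h : Relation.ReflTransGen F.R u v) :
    u ∈ U ∧ Relation.ReflTransGen (F.restrict U).R u v := by
  induction h using Relation.ReflTransGen.head_induction_on with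
  | refl => exact ⟨hv, Relation.ReflTransGen.refl⟩
  | @head a c h' h ih =>
    have haU : a ∈ U := by
      by_contra hna
      exact hunatt a ⟨(F.attack_mem h').1, hna⟩ c ih.1 h'
    exact ⟨haU, Relation.ReflTransGen.head ⟨h', haU, ih.1⟩ ih.2⟩

/-- SCCs of a finitary AF are countable. -/
theorem sccof_countable (H : AF α) (hH : Finitary H) (a : α) : (SCCof H a).Countable := by
  classical
  let T : ℕ → Set α := fun n => Nat.rec {a} (fun _ ih => {u | ∃ x ∈ ih, H.R u x}) n
  have hfin : ∀ n, (T n).Finite := by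
    intro n
    induction n with
    | zero => exact Set.finite_singleton a
    | succ n ihn =>
      have heq : T (n + 1) = ⋃ x ∈ T n, {u | H.R u x} := by
        ext u
        constructor
        · rintro ⟨x, hx, h⟩
          exact Set.mem_biUnion hx h
        · intro h
          obtain ⟨x, hx, h⟩ := Set.mem_iUnion₂.mp h
          exact ⟨x, hx, h⟩
      rw [heq]
      exact ihn.biUnion (fun x _ => hH x)
  have hsub : SCCof H a ⊆ ⋃ n, T n := by
    intro b hb
    have hrtg : Relation.ReflTransGen H.R b a := hb.2.2.2
    clear hb
    induction hrtg using Relation.ReflTransGen.head_induction_on with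
    | refl => exact Set.mem_iUnion.mpr ⟨0, rfl⟩
    | @head x c h' h ih =>
      obtain ⟨n, hn⟩ := Set.mem_iUnion.mp ih
      exact Set.mem_iUnion.mpr ⟨n + 1, ⟨c, hn, h'⟩⟩
  exact (Set.countable_iUnion fun n => (hfin n).countable).mono hsub

/-- Encoding of elements of a countable set by naturals. -/
noncomputable def enc (X : Set α) : α → ℕ :=
  if hX : X.Countable then
    fun x => if hx : x ∈ X then (Set.countable_iff_exists_injective.mp hX).choose ⟨x, hx⟩ else 0
  else fun _ => 0

theorem enc_injOn {X : Set α} (hX : X.Countable) : Set.InjOn (enc X) X := by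
  intro x hx y hy h
  simp only [enc, dif_pos hX, dif_pos hx, dif_pos hy] at h
  have := (Set.countable_iff_exists_injective.mp hX).choose_spec h
  exact congrArg Subtype.val this

noncomputable def eSCC (H : AF α) : α → ℕ := fun x => enc (SCCof H x) x

theorem eSCC_injOn (H : AF α) (hH : Finitary H) :
    ∀ a, Set.InjOn (eSCC H) (SCCof H a) := by
  intro a x hx y hy h
  have hex := sccof_eq hx
  have hey := sccof_eq hy
  have h' : enc (SCCof H a) x = enc (SCCof H a) y := by
    simp only [eSCC] at h
    rwa [hex, hey] at h
  exact enc_injOn (sccof_countable H hH a) hx hy h'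

/-! ### Canonical solutions of finite frameworks -/

noncomputable def pick (e : α → ℕ) (X : Finset α) (hX : X.Nonempty) : α :=
  (X.exists_min_image e hX).choose

theorem pick_mem (e : α → ℕ) (X : Finset α) (hX : X.Nonempty) : pick e X hX ∈ X :=
  (X.exists_min_image e hX).choose_spec.1

theorem pick_min (e : α → ℕ) (X : Finset α) (hX : X.Nonempty) :
    ∀ b ∈ X, e (pick e X hX) ≤ e b :=
  (X.exists_min_image e hX).choose_spec.2

open scoped Classical in
/-- Greedy maximal independent set along the order given by `e`. -/
noncomputable def greedy (H : AF α) (e : α → ℕ) (X : Finset α) : Finset α :=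
  if hX : X.Nonempty then
    if H.R (pick e X hX) (pick e X hX) then greedy H e (X.erase (pick e X hX))
    else insert (pick e X hX)
      (greedy H e (X.filter fun y =>
        ¬(H.R (pick e X hX) y ∨ H.R y (pick e X hX)) ∧ y ≠ pick e X hX))
  else ∅
termination_by X.card
decreasing_by
  · exact Finset.card_erase_lt_of_mem (pick_mem e X hX)
  · refine Finset.card_lt_card ?_
    refine Finset.filter_ssubset.mpr ⟨pick e X hX, pick_mem e X hX, ?_⟩
    simp

theorem greedy_spec (H : AF α) (e : α → ℕ) (X : Finset α) (hinj : Set.InjOn e ↑X) :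
    greedy H e X ⊆ X ∧
    (∀ u ∈ greedy H e X, ∀ u' ∈ greedy H e X, ¬H.R u u') ∧
    (∀ v ∈ X, v ∉ greedy H e X →
      H.R v v ∨ ∃ u ∈ greedy H e X, e u < e v ∧ (H.R u v ∨ H.R v u)) := by
  induction X using Finset.strongInductionOn with
  | _ X ih =>
  rw [greedy]
  by_cases hX : X.Nonempty
  case neg =>
    rw [dif_neg hX]
    refine ⟨Finset.empty_subset X, by simp, ?_⟩
    intro v hv _
    exact absurd ⟨v, hv⟩ hX
  case pos =>
  rw [dif_pos hX]
  have hxX : pick e X hX ∈ X := pick_mem e X hX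
  set x := pick e X hX with hxdef
  by_cases hself : H.R x x
  · rw [if_pos hself]
    have hih := ih (X.erase x) (Finset.erase_ssubset hxX)
      (hinj.mono (Finset.coe_subset.mpr (Finset.erase_subset _ _)))
    refine ⟨hih.1.trans (Finset.erase_subset _ _), hih.2.1, ?_⟩
    intro v hvX hvg
    by_cases hvx : v = x
    · exact Or.inl (hvx ▸ hself)
    · exact hih.2.2 v (Finset.mem_erase.mpr ⟨hvx, hvX⟩) hvg
  · rw [if_neg hself]
    set X' := X.filter (fun y => ¬(H.R x y ∨ H.R y x) ∧ y ≠ x) with hX'def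
    have hss : X' ⊂ X := Finset.filter_ssubset.mpr ⟨x, hxX, by simp⟩
    obtain ⟨hsub, hcf, hmax⟩ := ih X' hss
      (hinj.mono (Finset.coe_subset.mpr (Finset.filter_subset _ _)))
    have hsubX : insert x (greedy H e X') ⊆ X := by
      intro y hy
      rcases Finset.mem_insert.mp hy with rfl | hy
      · exact hxX
      · exact Finset.filter_subset _ _ (hsub hy)
    refine ⟨hsubX, ?_, ?_⟩
    · intro u hu u' hu'
      rcases Finset.mem_insert.mp hu with rfl | hu <;>
        rcases Finset.mem_insert.mp hu' with rfl | hu'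
      · exact hself
      · have := (Finset.mem_filter.mp (hsub hu')).2.1
        exact fun h => this (Or.inl h)
      · have := (Finset.mem_filter.mp (hsub hu)).2.1
        exact fun h => this (Or.inr h)
      · exact hcf u hu u' hu'
    · intro v hvX hvg
      by_cases hvx : v = x
      · exact absurd (by rw [hvx]; exact Finset.mem_insert_self x _ : v ∈ insert x (greedy H e X')) hvg
      by_cases hvX' : v ∈ X'
      · rcases hmax v hvX' (fun h => hvg (Finset.mem_insert_of_mem h)) with h | ⟨u, hu, hlt, hc⟩
        · exact Or.inl h
        · exact Or.inr ⟨u, Finset.mem_insert_of_mem hu, hlt, hc⟩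
      · have hnp : ¬(¬(H.R x v ∨ H.R v x) ∧ v ≠ x) := fun hc =>
          hvX' (Finset.mem_filter.mpr ⟨hvX, hc⟩)
        have hconf : H.R x v ∨ H.R v x := by tauto
        have hlt : e x < e v :=
          lt_of_le_of_ne (pick_min e X hX v hvX)
            (fun h => hvx (hinj (Finset.mem_coe.mpr hvX) (Finset.mem_coe.mpr hxX) h.symm))
        exact Or.inr ⟨x, Finset.mem_insert_self _ _, hlt, hconf⟩

def relW (H : AF α) (W : Finset α) : α → α → Prop := fun a b => H.R a b ∧ a ∈ W ∧ b ∈ W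

open scoped Classical in
noncomputable def ancW (H : AF α) (W : Finset α) (v : α) : Finset α :=
  W.filter fun u => Relation.ReflTransGen (relW H W) u v

noncomputable def pickSrc (H : AF α) (W : Finset α) (hW : W.Nonempty) : α :=
  (W.exists_min_image (fun v => (ancW H W v).card) hW).choose

theorem pickSrc_mem (H : AF α) (W : Finset α) (hW : W.Nonempty) : pickSrc H W hW ∈ W :=
  (W.exists_min_image (fun v => (ancW H W v).card) hW).choose_spec.1

theorem pickSrc_min (H : AF α) (W : Finset α) (hW : W.Nonempty) :
    ∀ b ∈ W, (ancW H W (pickSrc H W hW)).card ≤ (ancW H W b).card :=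
  (W.exists_min_image (fun v => (ancW H W v).card) hW).choose_spec.2

noncomputable def srcClass (H : AF α) (W : Finset α) (hW : W.Nonempty) : Finset α :=
  ancW H W (pickSrc H W hW)

theorem mem_ancW_self (H : AF α) {W : Finset α} {v : α} (hv : v ∈ W) : v ∈ ancW H W v :=
  Finset.mem_filter.mpr ⟨hv, Relation.ReflTransGen.refl⟩

theorem srcClass_subset (H : AF α) (W : Finset α) (hW : W.Nonempty) :
    srcClass H W hW ⊆ W := Finset.filter_subset _ _

theorem pickSrc_mem_srcClass (H : AF α) (W : Finset α) (hW : W.Nonempty) :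
    pickSrc H W hW ∈ srcClass H W hW := mem_ancW_self H (pickSrc_mem H W hW)

theorem srcClass_scc (H : AF α) (W : Finset α) (hW : W.Nonempty) (hWA : ↑W ⊆ H.A) :
    ↑(srcClass H W hW) ⊆ SCCof H (pickSrc H W hW) := by
  intro u hu
  have hu' := Finset.mem_filter.mp (Finset.mem_coe.mp hu)
  have hx0W := pickSrc_mem H W hW
  have h1 : Reach H u (pickSrc H W hW) :=
    ⟨hWA hu'.1, hWA hx0W, Relation.ReflTransGen.mono (fun _ _ (h : relW H W _ _) => h.1) _ _ hu'.2⟩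
  have hsub2 : ancW H W u ⊆ srcClass H W hW := by
    intro w hw
    have hw' := Finset.mem_filter.mp hw
    exact Finset.mem_filter.mpr ⟨hw'.1, hw'.2.trans hu'.2⟩
  have heq : ancW H W u = srcClass H W hW :=
    Finset.eq_of_subset_of_card_le hsub2 (pickSrc_min H W hW u hu'.1)
  have hx0mem : pickSrc H W hW ∈ ancW H W u := by
    rw [heq]; exact pickSrc_mem_srcClass H W hW
  have h2 : Reach H (pickSrc H W hW) u :=
    ⟨hWA hx0W, hWA hu'.1,
      Relation.ReflTransGen.mono (fun _ _ (h : relW H W _ _) => h.1) _ _ (Finset.mem_filter.mp hx0mem).2⟩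
  exact ⟨h2, h1⟩

theorem srcClass_closed (H : AF α) (W : Finset α) (hW : W.Nonempty) :
    ∀ s ∈ W, ∀ u ∈ srcClass H W hW, H.R s u → s ∈ srcClass H W hW := by
  intro s hs u hu hR
  have hu' := Finset.mem_filter.mp hu
  exact Finset.mem_filter.mpr ⟨hs, Relation.ReflTransGen.head ⟨hR, hs, hu'.1⟩ hu'.2⟩

open scoped Classical in
noncomputable def unkilled (H : AF α) (W P : Finset α) : Finset α :=
  W.filter fun v => ¬∃ p ∈ P, H.R p v

open scoped Classical in
/-- Canonical solution of the finite framework on `W`, given already-chosen attackers `P`. -/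
noncomputable def canon (H : AF α) (e : α → ℕ) (W P : Finset α) : Finset α :=
  if h0 : (unkilled H W P).Nonempty then
    greedy H e (srcClass H (unkilled H W P) h0) ∪
      canon H e (unkilled H W P \ srcClass H (unkilled H W P) h0)
        (P ∪ greedy H e (srcClass H (unkilled H W P) h0))
  else ∅
termination_by W.card
decreasing_by
  have hx : pickSrc H (unkilled H W P) h0 ∈ unkilled H W P := pickSrc_mem _ _ _
  have hss : unkilled H W P \ srcClass H (unkilled H W P) h0 ⊂ unkilled H W P :=
    (Finset.ssubset_iff_of_subset (Finset.sdiff_subset)).mpr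
      ⟨pickSrc H (unkilled H W P) h0, hx,
        fun hmem => (Finset.mem_sdiff.mp hmem).2 (pickSrc_mem_srcClass _ _ _)⟩
  exact lt_of_lt_of_le (Finset.card_lt_card hss)
    (Finset.card_le_card (Finset.filter_subset _ _))

theorem canon_spec (H : AF α) (e : α → ℕ) (hinj : ∀ a, Set.InjOn e (SCCof H a))
    (W : Finset α) : ∀ P : Finset α, ↑W ⊆ H.A →
    (canon H e W P ⊆ W ∧ ∀ t ∈ canon H e W P, ∀ p ∈ P, ¬H.R p t) ∧
    (∀ t ∈ canon H e W P, ∀ t' ∈ canon H e W P, ¬H.R t t') ∧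
    (∀ v ∈ W, v ∉ canon H e W P →
      H.R v v ∨ (∃ p ∈ P, H.R p v) ∨ (∃ s ∈ canon H e W P, H.R s v) ∨
        ∃ u ∈ canon H e W P,
          e u < e v ∧ Reach H u v ∧ Reach H v u ∧ (H.R u v ∨ H.R v u)) := by
  induction W using Finset.strongInductionOn with
  | _ W ih =>
  intro P hWA
  rw [canon]
  by_cases h0 : (unkilled H W P).Nonempty
  case neg =>
    rw [dif_neg h0]
    refine ⟨⟨Finset.empty_subset _, by simp⟩, by simp, ?_⟩
    intro v hvW hv
    have hvk : v ∉ unkilled H W P := by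
      rw [Finset.not_nonempty_iff_eq_empty.mp h0]
      exact Finset.notMem_empty v
    have : ∃ p ∈ P, H.R p v := by
      by_contra hc
      exact hvk (Finset.mem_filter.mpr ⟨hvW, hc⟩)
    exact Or.inr (Or.inl this)
  case pos =>
  rw [dif_pos h0]
  have hW0W : unkilled H W P ⊆ W := Finset.filter_subset _ _
  set W0 := unkilled H W P with hW0def
  have hW0A : ↑W0 ⊆ H.A := fun x hx => hWA (hW0W hx)
  set x0 := pickSrc H W0 h0 with hx0def
  set X := srcClass H W0 h0 with hXdef
  have hXW0 : X ⊆ W0 := srcClass_subset H W0 h0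
  have hXscc : ↑X ⊆ SCCof H x0 := srcClass_scc H W0 h0 hW0A
  have hinjX : Set.InjOn e ↑X := (hinj x0).mono hXscc
  set N := greedy H e X with hNdef
  obtain ⟨hNsub, hNcf, hNmax⟩ := greedy_spec H e X hinjX
  have hssub : W0 \ X ⊂ W := by
    refine ssubset_of_ssubset_of_subset ?_ hW0W
    exact (Finset.ssubset_iff_of_subset (Finset.sdiff_subset)).mpr
      ⟨x0, pickSrc_mem H W0 h0,
        fun hmem => (Finset.mem_sdiff.mp hmem).2 (pickSrc_mem_srcClass H W0 h0)⟩
  have hcoe : ↑(W0 \ X) ⊆ H.A := fun x hx => hW0A (Finset.sdiff_subset hx)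
  obtain ⟨⟨hCsub, hCP⟩, hCcf, hCmax⟩ := ih (W0 \ X) hssub (P ∪ N) hcoe
  set C := canon H e (W0 \ X) (P ∪ N) with hCdef
  refine ⟨⟨?_, ?_⟩, ?_, ?_⟩
  · exact Finset.union_subset ((hNsub.trans hXW0).trans hW0W)
      (hCsub.trans ((Finset.sdiff_subset).trans hW0W))
  · intro t ht p hp hR
    rcases Finset.mem_union.mp ht with ht | ht
    · exact (Finset.mem_filter.mp (hXW0 (hNsub ht))).2 ⟨p, hp, hR⟩
    · exact hCP t ht p (Finset.mem_union_left _ hp) hR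
  · intro t ht t' ht' hR
    rcases Finset.mem_union.mp ht with ht | ht <;> rcases Finset.mem_union.mp ht' with ht' | ht'
    · exact hNcf t ht t' ht' hR
    · exact hCP t' ht' t (Finset.mem_union_right _ ht) hR
    · have htW0 : t ∈ W0 := (Finset.mem_sdiff.mp (hCsub ht)).1
      have htnX : t ∉ X := (Finset.mem_sdiff.mp (hCsub ht)).2
      exact htnX (srcClass_closed H W0 h0 t htW0 t' (hNsub ht') hR)
    · exact hCcf t ht t' ht' hR
  · intro v hvW hv
    by_cases hvW0 : v ∈ W0
    · by_cases hvX : v ∈ X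
      · have hvN : v ∉ N := fun h => hv (Finset.mem_union_left _ h)
        rcases hNmax v hvX hvN with h | ⟨u, hu, hlt, hconf⟩
        · exact Or.inl h
        · have h1 : u ∈ SCCof H x0 := hXscc (Finset.mem_coe.mpr (hNsub hu))
          have h2 : v ∈ SCCof H x0 := hXscc (Finset.mem_coe.mpr hvX)
          exact Or.inr (Or.inr (Or.inr ⟨u, Finset.mem_union_left _ hu, hlt,
            reach_trans h1.2 h2.1, reach_trans h2.2 h1.1, hconf⟩))
      · have hvC : v ∉ C := fun h => hv (Finset.mem_union_right _ h)
        rcases hCmax v (Finset.mem_sdiff.mpr ⟨hvW0, hvX⟩) hvC with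
          h | ⟨p, hp, hR⟩ | ⟨s, hs, hR⟩ | ⟨u, hu, hrest⟩
        · exact Or.inl h
        · rcases Finset.mem_union.mp hp with hp | hp
          · exact Or.inr (Or.inl ⟨p, hp, hR⟩)
          · exact Or.inr (Or.inr (Or.inl ⟨p, Finset.mem_union_left _ hp, hR⟩))
        · exact Or.inr (Or.inr (Or.inl ⟨s, Finset.mem_union_right _ hs, hR⟩))
        · exact Or.inr (Or.inr (Or.inr ⟨u, Finset.mem_union_right _ hu, hrest⟩))
    · have : ∃ p ∈ P, H.R p v := by
        by_contra hc
        exact hvW0 (Finset.mem_filter.mpr ⟨hvW, hc⟩)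
      exact Or.inr (Or.inl this)

/-- Existence of pointwise-cf1.5 extensions for finitary frameworks. -/
theorem exists_PW (H : AF α) (hH : Finitary H) : ∃ S : Set α, PW H S := by
  classical
  set e : α → ℕ := eSCC H with hedef
  have hinj : ∀ a, Set.InjOn e (SCCof H a) := eSCC_injOn H hH
  set τ : Finset α → Finset α := fun W => canon H e (W.filter (· ∈ H.A)) ∅ with hτdef
  have hspec : ∀ W : Finset α,
      (τ W ⊆ W.filter (· ∈ H.A) ∧ ∀ t ∈ τ W, ∀ p ∈ (∅ : Finset α), ¬H.R p t) ∧
      (∀ t ∈ τ W, ∀ t' ∈ τ W, ¬H.R t t') ∧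
      (∀ v ∈ W.filter (· ∈ H.A), v ∉ τ W →
        H.R v v ∨ (∃ p ∈ (∅ : Finset α), H.R p v) ∨ (∃ s ∈ τ W, H.R s v) ∨
          ∃ u ∈ τ W, e u < e v ∧ Reach H u v ∧ Reach H v u ∧ (H.R u v ∨ H.R v u)) :=
    fun W => canon_spec H e hinj (W.filter (· ∈ H.A)) ∅
      (fun x hx => (Finset.mem_filter.mp (Finset.mem_coe.mp hx)).2)
  haveI : (Filter.atTop : Filter (Finset α)).NeBot := Filter.atTop_neBot
  set U := Ultrafilter.of (Filter.atTop : Filter (Finset α)) with hUdef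
  set S : Set α := {v | {W : Finset α | v ∈ τ W} ∈ U} with hSdef
  have hmemA : ∀ v ∈ S, v ∈ H.A := by
    intro v hv
    obtain ⟨W, hW⟩ := Ultrafilter.nonempty_of_mem hv
    exact (Finset.mem_filter.mp ((hspec W).1.1 hW)).2
  refine ⟨S, ⟨hmemA, ?_⟩, ?_⟩
  · intro a ha b hb hab
    have hmem : {W : Finset α | a ∈ τ W} ∩ {W : Finset α | b ∈ τ W} ∈ U :=
      Filter.inter_mem ha hb
    obtain ⟨W, hWa, hWb⟩ := Ultrafilter.nonempty_of_mem hmem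
    exact (hspec W).2.1 a hWa b hWb hab
  · intro v hvA hvS
    by_cases hself : H.R v v
    · exact Or.inl hself
    have hB1 : {W : Finset α | v ∈ W} ∈ U := by
      have h1 : {W : Finset α | {v} ≤ W} ∈ (Filter.atTop : Filter (Finset α)) :=
        Filter.mem_atTop {v}
      have h2 : {W : Finset α | {v} ≤ W} ∈ U := Ultrafilter.of_le _ h1
      exact Filter.mem_of_superset h2
        (fun W hW => Finset.singleton_subset_iff.mp hW)
    have hB2 : {W : Finset α | v ∉ τ W} ∈ U := by
      have : {W : Finset α | v ∈ τ W}ᶜ ∈ U := (Ultrafilter.compl_mem_iff_notMem).mpr hvS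
      exact this
    have hB : {W : Finset α | v ∈ W} ∩ {W : Finset α | v ∉ τ W} ∈ U :=
      Filter.inter_mem hB1 hB2
    -- candidate witnesses
    set Att : Set α := {s | H.R s v} with hAttdef
    set Cand2 : Set α := {u | u ∈ SCCof H v ∧ e u < e v ∧ H.R v u} with hC2def
    have hC2fin : Cand2.Finite := by
      have himg : (e '' Cand2).Finite :=
        (Set.finite_Iio (e v)).subset (by rintro _ ⟨u, hu, rfl⟩; exact hu.2.1)
      exact Set.Finite.of_finite_image himg ((hinj v).mono (fun u hu => hu.1))
    have hCfin : (Att ∪ Cand2).Finite := (hH v).union hC2fin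
    have hkey : ∀ W ∈ {W : Finset α | v ∈ W} ∩ {W : Finset α | v ∉ τ W},
        ∃ c ∈ Att ∪ Cand2, c ∈ τ W := by
      rintro W ⟨hWv, hWτ⟩
      have hvfil : v ∈ W.filter (· ∈ H.A) := Finset.mem_filter.mpr ⟨hWv, hvA⟩
      rcases (hspec W).2.2 v hvfil hWτ with h | ⟨p, hp, -⟩ | ⟨s, hs, hR⟩ | ⟨u, hu, hlt, hr1, hr2, hc⟩
      · exact absurd h hself
      · exact absurd hp (Finset.notMem_empty p)
      · exact ⟨s, Or.inl hR, hs⟩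
      · rcases hc with hc | hc
        · exact ⟨u, Or.inl hc, hu⟩
        · exact ⟨u, Or.inr ⟨⟨hr2, hr1⟩, hlt, hc⟩, hu⟩
    have hclaim : ∃ c ∈ Att ∪ Cand2, {W : Finset α | c ∈ τ W} ∈ U := by
      by_contra hcon
      push_neg at hcon
      have hI : (⋂ c ∈ Att ∪ Cand2, {W : Finset α | c ∈ τ W}ᶜ) ∈ U :=
        (Filter.biInter_mem hCfin).mpr
          (fun c hc => (Ultrafilter.compl_mem_iff_notMem).mpr (hcon c hc))
      obtain ⟨W, hWB, hWI⟩ := Ultrafilter.nonempty_of_mem (Filter.inter_mem hB hI)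
      obtain ⟨c, hc, hcτ⟩ := hkey W hWB
      exact (Set.mem_iInter₂.mp hWI c hc) hcτ
    obtain ⟨c, hc, hcU⟩ := hclaim
    have hcS : c ∈ S := hcU
    rcases hc with hc | hc
    · exact Or.inr (Or.inl ⟨c, hcS, hc⟩)
    · exact Or.inr (Or.inr ⟨c, hcS, hc.2.2, hc.1.1, hc.1.2⟩)

end CF15Proof

/-- cf1.5 satisfies finitary directionality. -/
theorem statement3 {α : Type u} (F : AF α) (hF : AF.Finitary F)
    (U : Set α) (hU : U ⊆ F.A)
    (hunatt : ∀ a ∈ F.A \ U, ∀ b ∈ U, ¬ F.R a b) :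
    {S | AF.CF15 (F.restrict U) S} = {T | ∃ S, AF.CF15 F S ∧ T = S ∩ U} := by
  classical
  apply Set.Subset.antisymm
  · intro S hS
    have hpwS : CF15Proof.PW (F.restrict U) S := CF15Proof.char.mp hS
    have hSU : S ⊆ F.A ∩ U := hpwS.1.1
    set V : Set α := {x | x ∉ U ∧ ¬∃ s ∈ S, F.R s x} with hVdef
    have hGfin : AF.Finitary (F.restrict V) := fun a => (hF a).subset (fun x hx => hx.1)
    obtain ⟨T, hT⟩ := CF15Proof.exists_PW (F.restrict V) hGfin
    have hTA : T ⊆ F.A ∩ V := hT.1.1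
    refine ⟨S ∪ T, ?_, ?_⟩
    · apply CF15Proof.char.mpr
      constructor
      · constructor
        · rintro x (hx | hx)
          · exact (hSU hx).1
          · exact (hTA hx).1
        · rintro a (ha | ha) b (hb | hb) hab
          · exact hpwS.1.2 a ha b hb ⟨hab, (hSU ha).2, (hSU hb).2⟩
          · exact (hTA hb).2.2 ⟨a, ha, hab⟩
          · exact hunatt a ⟨(hTA ha).1, (hTA ha).2.1⟩ b (hSU hb).2 hab
          · exact hT.1.2 a ha b hb ⟨hab, (hTA ha).2, (hTA hb).2⟩
      · intro v hvA hvS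
        have hv1 : v ∉ S := fun h => hvS (Or.inl h)
        have hv2 : v ∉ T := fun h => hvS (Or.inr h)
        by_cases hvU : v ∈ U
        · rcases hpwS.2 v ⟨hvA, hvU⟩ hv1 with h | ⟨s, hs, h⟩ | ⟨w, hw, h1, h2, h3⟩
          · exact Or.inl h.1
          · exact Or.inr (Or.inl ⟨s, Or.inl hs, h.1⟩)
          · exact Or.inr (Or.inr ⟨w, Or.inl hw, h1.1,
              CF15Proof.reach_restrict h2, CF15Proof.reach_restrict h3⟩)
        · by_cases hkill : ∃ s ∈ S, F.R s v
          · obtain ⟨s, hs, hR⟩ := hkill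
            exact Or.inr (Or.inl ⟨s, Or.inl hs, hR⟩)
          · have hvV : v ∈ V := ⟨hvU, hkill⟩
            rcases hT.2 v ⟨hvA, hvV⟩ hv2 with h | ⟨s, hs, h⟩ | ⟨w, hw, h1, h2, h3⟩
            · exact Or.inl h.1
            · exact Or.inr (Or.inl ⟨s, Or.inr hs, h.1⟩)
            · exact Or.inr (Or.inr ⟨w, Or.inr hw, h1.1,
                CF15Proof.reach_restrict h2, CF15Proof.reach_restrict h3⟩)
    · ext x
      constructor
      · intro hx
        exact ⟨Or.inl hx, (hSU hx).2⟩
      · rintro ⟨hx1 | hx1, hx2⟩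
        · exact hx1
        · exact absurd hx2 (hTA hx1).2.1
  · rintro T ⟨S', hS', rfl⟩
    have hpw := CF15Proof.char.mp hS'
    apply CF15Proof.char.mpr
    constructor
    · constructor
      · rintro x ⟨hx1, hx2⟩
        exact ⟨hpw.1.1 hx1, hx2⟩
      · rintro a ⟨ha, -⟩ b ⟨hb, -⟩ hab
        exact hpw.1.2 a ha b hb hab.1
    · rintro v ⟨hvA, hvU⟩ hvT
      have hvS' : v ∉ S' := fun h => hvT ⟨h, hvU⟩
      rcases hpw.2 v hvA hvS' with h | ⟨s, hs, h⟩ | ⟨w, hw, h1, h2, h3⟩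
      · exact Or.inl ⟨h, hvU, hvU⟩
      · have hsA : s ∈ F.A := (F.attack_mem h).1
        have hsU : s ∈ U := by
          by_contra hns
          exact hunatt s ⟨hsA, hns⟩ v hvU h
        exact Or.inr (Or.inl ⟨s, ⟨hs, hsU⟩, h, hsU, hvU⟩)
      · have hwA : w ∈ F.A := h2.2.1
        obtain ⟨hwU, hrtg1⟩ := CF15Proof.rtg_into_U hunatt hvU h3.2.2
        obtain ⟨-, hrtg2⟩ := CF15Proof.rtg_into_U hunatt hwU h2.2.2
        exact Or.inr (Or.inr ⟨w, ⟨hw, hwU⟩, ⟨h1, hvU, hwU⟩,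
          ⟨⟨hvA, hvU⟩, ⟨hwA, hwU⟩, hrtg2⟩, ⟨⟨hwA, hwU⟩, ⟨hvA, hvU⟩, hrtg1⟩⟩)
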